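/- arXiv:1701.02119 — 9 statements merged into one kernel-verified Lean document; each statement's English description precedes it below -/
import Mathlib

section
/- Let W: X → Y be a DMC with fixed input distribution P_X (all π(x) > 0, all π(y) > 0), let y_a, y_b ∈ Y be distinct, and let x ∈ X. Then ΔI_x := π_ab η(γ_x) − π_a η(α_x) − π_b η(β_x) satisfies ΔI_x ≤ (π_a + π_b) · |β_x − α_x|. -/
open scoped BigOperators

/-- `η(p) = -p ln p` (equals `0` at `p = 0` since `Real.log 0 = 0`). -/
noncomputable def eta (p : ℝ) : ℝ := -p * Real.log p

/-- Output distribution `π(y) = ∑ x, π(x) W(y|x)`. -/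
noncomputable def outDist {X Y : Type} [Fintype X] (pX : X → ℝ) (W : X → Y → ℝ) (y : Y) : ℝ :=
  ∑ x, pX x * W x y

/-- Posterior probability `W(x|y) = π(x) W(y|x) / π(y)`. -/
noncomputable def post {X Y : Type} [Fintype X] (pX : X → ℝ) (W : X → Y → ℝ) (x : X) (y : Y) : ℝ :=
  pX x * W x y / outDist pX W y

lemma term_bound (t g : ℝ) (ht : 0 ≤ t) (hg : 0 < g) :
    t * (Real.log t - Real.log g) ≤ t * ((t - g) / g) := by
  rcases eq_or_lt_of_le ht with h | h
  · simp [← h]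
  · have h1 : Real.log (t / g) ≤ t / g - 1 :=
      Real.log_le_sub_one_of_pos (by positivity)
    rw [Real.log_div (ne_of_gt h) (ne_of_gt hg)] at h1
    have h2 : t / g - 1 = (t - g) / g := by field_simp
    exact mul_le_mul_of_nonneg_left (by linarith) ht

lemma key (pa pb a b : ℝ) (hpa : 0 < pa) (hpb : 0 < pb) (ha : 0 ≤ a) (hb : 0 ≤ b) :
    (pa + pb) * eta ((pa * a + pb * b) / (pa + pb)) - pa * eta a - pb * eta b ≤
      (pa + pb) * |b - a| := by
  have hs0 : 0 < pa + pb := by positivity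
  by_cases hab0 : pa * a + pb * b = 0
  · have ha0 : a = 0 := by nlinarith
    have hb0 : b = 0 := by nlinarith
    simp [eta, ha0, hb0]
  · have hN : 0 < pa * a + pb * b := lt_of_le_of_ne (by positivity) (Ne.symm hab0)
    set g := (pa * a + pb * b) / (pa + pb) with hgdef
    have hgpos : 0 < g := by positivity
    have hsg : (pa + pb) * g = pa * a + pb * b := by
      rw [hgdef, mul_div_assoc']
      exact mul_div_cancel_left₀ _ hs0.ne'
    have hL : (pa + pb) * eta g - pa * eta a - pb * eta b
        = pa * (a * (Real.log a - Real.log g)) + pb * (b * (Real.log b - Real.log g)) := by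
      simp only [eta]
      linear_combination (-(Real.log g)) * hsg
    rw [hL]
    have hb1 : pa * (a * (Real.log a - Real.log g)) ≤ pa * (a * ((a - g) / g)) :=
      mul_le_mul_of_nonneg_left (term_bound a g ha hgpos) hpa.le
    have hb2 : pb * (b * (Real.log b - Real.log g)) ≤ pb * (b * ((b - g) / g)) :=
      mul_le_mul_of_nonneg_left (term_bound b g hb hgpos) hpb.le
    have hfin : pa * (a * ((a - g) / g)) + pb * (b * ((b - g) / g)) ≤ (pa + pb) * |b - a| := by
      have heq : pa * (a * ((a - g) / g)) + pb * (b * ((b - g) / g))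
          = (pa * a * (a - g) + pb * b * (b - g)) / g := by ring
      rw [heq, div_le_iff₀ hgpos]
      have h3 : (pa + pb) * (pa * a * (a - g) + pb * b * (b - g)) = pa * pb * (a - b) ^ 2 := by
        linear_combination (-(pa * a + pb * b)) * hsg
      have key2 : pa * pb * (a - b) ^ 2 ≤ (pa + pb) * |b - a| * (pa * a + pb * b) := by
        rcases abs_cases (b - a) with ⟨he, hsign⟩ | ⟨he, hsign⟩
        · rw [he]
          nlinarith [mul_nonneg hsign (mul_nonneg (mul_nonneg hpa.le hpa.le) ha),
            mul_nonneg hsign (mul_nonneg (mul_nonneg hpa.le hpb.le) ha),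
            mul_nonneg hsign (mul_nonneg (mul_nonneg hpb.le hpb.le) hb)]
        · rw [he]
          have hsign' : 0 ≤ a - b := by linarith
          nlinarith [mul_nonneg hsign' (mul_nonneg (mul_nonneg hpa.le hpa.le) ha),
            mul_nonneg hsign' (mul_nonneg (mul_nonneg hpa.le hpb.le) hb),
            mul_nonneg hsign' (mul_nonneg (mul_nonneg hpb.le hpb.le) hb)]
      have h4 : (pa + pb) * ((pa + pb) * |b - a| * g) = (pa + pb) * |b - a| * (pa * a + pb * b) := by
        linear_combination ((pa + pb) * |b - a|) * hsg
      have h5 : (pa + pb) * (pa * a * (a - g) + pb * b * (b - g)) ≤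
          (pa + pb) * ((pa + pb) * |b - a| * g) := by rw [h3, h4]; exact key2
      exact le_of_mul_le_mul_left h5 hs0
    linarith

/-- First bound on `ΔI_x`: `ΔI_x ≤ (π_a + π_b) |β_x - α_x|`. -/
theorem deltaIx_le_d1 {X Y : Type} [Fintype X] [Fintype Y]
    (pX : X → ℝ) (W : X → Y → ℝ)
    (hW0 : ∀ x y, 0 ≤ W x y) (hW1 : ∀ x, ∑ y, W x y = 1)
    (hpX : ∀ x, 0 < pX x) (hpXsum : ∑ x, pX x = 1)
    (hpY : ∀ y, 0 < outDist pX W y)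
    (ya yb : Y) (hab : ya ≠ yb) (x : X)
    (pa pb ax bx gx : ℝ)
    (hpa : pa = outDist pX W ya) (hpb : pb = outDist pX W yb)
    (hax : ax = post pX W x ya) (hbx : bx = post pX W x yb)
    (hgx : gx = (pa * ax + pb * bx) / (pa + pb)) :
    (pa + pb) * eta gx - pa * eta ax - pb * eta bx ≤ (pa + pb) * |bx - ax| := by
  have hpa0 : 0 < pa := hpa ▸ hpY ya
  have hpb0 : 0 < pb := hpb ▸ hpY yb
  have hax0 : 0 ≤ ax := by
    rw [hax, post]
    exact div_nonneg (mul_nonneg (hpX x).le (hW0 x ya)) (hpY ya).le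
  have hbx0 : 0 ≤ bx := by
    rw [hbx, post]
    exact div_nonneg (mul_nonneg (hpX x).le (hW0 x yb)) (hpY yb).le
  rw [hgx]
  exact key pa pb ax bx hpa0 hpb0 hax0 hbx0
end

section
/- Let W: X → Y be a DMC with fixed input distribution P_X (all π(x) > 0, all π(y) > 0), let y_a, y_b ∈ Y be distinct, and let x ∈ X be such that α_x > 0 and β_x > 0. Then ΔI_x := π_ab η(γ_x) − π_a η(α_x) − π_b η(β_x) satisfies ΔI_x ≤ (π_a + π_b) · (α_x − β_x)² / min(α_x, β_x). -/
open scoped BigOperators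

/-- Tangent line bound for the concave function `η`. -/
lemma eta_tangent {a g : ℝ} (ha : 0 < a) (hg : 0 < g) :
    eta g ≤ eta a + (-(Real.log a) - 1) * (g - a) := by
  have h := Real.log_le_sub_one_of_pos (div_pos ha hg)
  rw [Real.log_div ha.ne' hg.ne'] at h
  have h2 : g * (Real.log a - Real.log g) ≤ g * (a / g - 1) :=
    mul_le_mul_of_nonneg_left h hg.le
  have h3 : g * (a / g - 1) = a - g := by field_simp
  simp only [eta]
  nlinarith [h2, h3]

lemma log_diff_bound {a b : ℝ} (ha : 0 < a) (hb : 0 < b) :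
    (b - a) * (Real.log b - Real.log a) ≤ (a - b) ^ 2 / min a b := by
  rcases le_total a b with h | h
  · rw [min_eq_left h]
    have h1 := Real.log_le_sub_one_of_pos (div_pos hb ha)
    rw [Real.log_div hb.ne' ha.ne'] at h1
    have h2 : Real.log b - Real.log a ≤ (b - a) / a := by
      have : b / a - 1 = (b - a) / a := by field_simp
      linarith
    have hba : 0 ≤ b - a := by linarith
    calc (b - a) * (Real.log b - Real.log a) ≤ (b - a) * ((b - a) / a) :=
          mul_le_mul_of_nonneg_left h2 hba
      _ = (a - b) ^ 2 / a := by ring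
  · rw [min_eq_right h]
    have h1 := Real.log_le_sub_one_of_pos (div_pos ha hb)
    rw [Real.log_div ha.ne' hb.ne'] at h1
    have h2 : Real.log a - Real.log b ≤ (a - b) / b := by
      have : a / b - 1 = (a - b) / b := by field_simp
      linarith
    have hab : 0 ≤ a - b := by linarith
    calc (b - a) * (Real.log b - Real.log a) = (a - b) * (Real.log a - Real.log b) := by ring
      _ ≤ (a - b) * ((a - b) / b) := mul_le_mul_of_nonneg_left h2 hab
      _ = (a - b) ^ 2 / b := by ring

lemma key_ineq {pa pb a b : ℝ} (hpa : 0 < pa) (hpb : 0 < pb) (ha : 0 < a) (hb : 0 < b) :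
    (pa + pb) * eta ((pa * a + pb * b) / (pa + pb)) - pa * eta a - pb * eta b ≤
      (pa + pb) * ((a - b) ^ 2 / min a b) := by
  set g : ℝ := (pa * a + pb * b) / (pa + pb) with hg
  have hpab : 0 < pa + pb := by linarith
  have hg0 : 0 < g := div_pos (by positivity) hpab
  have t1 := eta_tangent ha hg0
  have t2 := eta_tangent hb hg0
  have hga : g - a = pb * (b - a) / (pa + pb) := by
    rw [hg]; field_simp; ring
  have hgb : g - b = pa * (a - b) / (pa + pb) := by
    rw [hg]; field_simp; ring
  have step1 : (pa + pb) * eta g - pa * eta a - pb * eta b ≤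
      pa * pb / (pa + pb) * ((b - a) * (Real.log b - Real.log a)) := by
    have e1 : pa * eta g ≤ pa * (eta a + (-(Real.log a) - 1) * (g - a)) :=
      mul_le_mul_of_nonneg_left t1 hpa.le
    have e2 : pb * eta g ≤ pb * (eta b + (-(Real.log b) - 1) * (g - b)) :=
      mul_le_mul_of_nonneg_left t2 hpb.le
    have key : pa * ((-(Real.log a) - 1) * (g - a)) + pb * ((-(Real.log b) - 1) * (g - b)) =
        pa * pb / (pa + pb) * ((b - a) * (Real.log b - Real.log a)) := by
      rw [hga, hgb]; field_simp; ring
    nlinarith [e1, e2]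
  have step2 : pa * pb / (pa + pb) * ((b - a) * (Real.log b - Real.log a)) ≤
      (pa + pb) * ((a - b) ^ 2 / min a b) := by
    have hld := log_diff_bound ha hb
    have hc : 0 < pa * pb / (pa + pb) := by positivity
    have hA : pa * pb / (pa + pb) * ((b - a) * (Real.log b - Real.log a)) ≤
        pa * pb / (pa + pb) * ((a - b) ^ 2 / min a b) :=
      mul_le_mul_of_nonneg_left hld hc.le
    have hB : pa * pb / (pa + pb) ≤ pa + pb := by
      rw [div_le_iff₀ hpab]; nlinarith
    have hnn : 0 ≤ (a - b) ^ 2 / min a b := by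
      have : 0 < min a b := lt_min ha hb
      positivity
    calc pa * pb / (pa + pb) * ((b - a) * (Real.log b - Real.log a))
        ≤ pa * pb / (pa + pb) * ((a - b) ^ 2 / min a b) := hA
      _ ≤ (pa + pb) * ((a - b) ^ 2 / min a b) := mul_le_mul_of_nonneg_right hB hnn
  linarith

/-- Second bound on `ΔI_x`: if `α_x, β_x > 0` then
`ΔI_x ≤ (π_a + π_b) (α_x - β_x)² / min (α_x, β_x)`. -/
theorem deltaIx_le_d2 {X Y : Type} [Fintype X] [Fintype Y]
    (pX : X → ℝ) (W : X → Y → ℝ)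
    (hW0 : ∀ x y, 0 ≤ W x y) (hW1 : ∀ x, ∑ y, W x y = 1)
    (hpX : ∀ x, 0 < pX x) (hpXsum : ∑ x, pX x = 1)
    (hpY : ∀ y, 0 < outDist pX W y)
    (ya yb : Y) (hab : ya ≠ yb) (x : X)
    (pa pb ax bx gx : ℝ)
    (hpa : pa = outDist pX W ya) (hpb : pb = outDist pX W yb)
    (hax : ax = post pX W x ya) (hbx : bx = post pX W x yb)
    (hax0 : 0 < ax) (hbx0 : 0 < bx)
    (hgx : gx = (pa * ax + pb * bx) / (pa + pb)) :
    (pa + pb) * eta gx - pa * eta ax - pb * eta bx ≤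
      (pa + pb) * ((ax - bx) ^ 2 / min ax bx) := by
  have hpa0 : 0 < pa := hpa ▸ hpY ya
  have hpb0 : 0 < pb := hpb ▸ hpY yb
  rw [hgx]
  exact key_ineq hpa0 hpb0 hax0 hbx0
end

section
/- Let α ≥ 0 and r > 0, and define B(α,r) := {ζ ∈ ℝ : d(α,ζ) ≤ r}. Then B(α,r) = {ζ ∈ ℝ : −ω↓(α,r) ≤ ζ − α ≤ ω↑(α,r)}, where ω↓(α,r) := max(√(r²/4 + αr) − r/2, r) and ω↑(α,r) := max(√(αr), r). -/
/-- The scalar "distance" `d(α,ζ) = min (d₁(α,ζ), d₂(α,ζ))` where `d₁(α,ζ) = |ζ - α|` and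
`d₂(α,ζ) = (ζ-α)²/min(α,ζ)` if `α,ζ > 0` and `∞` otherwise (so the `min` collapses to `d₁`
in that case). -/
noncomputable def dSc (a z : ℝ) : ℝ :=
  if 0 < a ∧ 0 < z then min |z - a| ((z - a) ^ 2 / min a z) else |z - a|

/-- `ω↓(α,r) = max (√(r²/4 + αr) - r/2, r)`. -/
noncomputable def omegaDown (a r : ℝ) : ℝ :=
  max (Real.sqrt (r ^ 2 / 4 + a * r) - r / 2) r

/-- `ω↑(α,r) = max (√(αr), r)`. -/
noncomputable def omegaUp (a r : ℝ) : ℝ :=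
  max (Real.sqrt (a * r)) r

/-- Explicit description of the "sphere" `B(α,r) = {ζ : d(α,ζ) ≤ r}`:
`B(α,r) = {ζ : -ω↓(α,r) ≤ ζ - α ≤ ω↑(α,r)}`. -/
theorem ball_d_eq (a r : ℝ) (ha : 0 ≤ a) (hr : 0 < r) :
    {z : ℝ | dSc a z ≤ r} =
      {z : ℝ | -omegaDown a r ≤ z - a ∧ z - a ≤ omegaUp a r} := by
  have hs1 : Real.sqrt (r ^ 2 / 4 + a * r) ^ 2 = r ^ 2 / 4 + a * r :=
    Real.sq_sqrt (by positivity)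
  have hs2 : Real.sqrt (a * r) ^ 2 = a * r := Real.sq_sqrt (by positivity)
  have hn1 : 0 ≤ Real.sqrt (r ^ 2 / 4 + a * r) := Real.sqrt_nonneg _
  have hn2 : 0 ≤ Real.sqrt (a * r) := Real.sqrt_nonneg _
  ext z
  simp only [Set.mem_setOf_eq, dSc, omegaDown, omegaUp]
  constructor
  · intro h
    constructor
    · rw [neg_le, neg_sub, le_max_iff]
      rcases le_or_gt (a - z) r with h' | h'
      · exact Or.inr h'
      · left
        split_ifs at h with hpos
        · obtain ⟨ha', hz⟩ := hpos
          rcases min_le_iff.mp h with h | h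
          · exact absurd (abs_le.mp h).1 (by linarith)
          · have hmin : min a z = z := min_eq_right (by linarith)
            rw [hmin, div_le_iff₀ hz] at h
            have key : (a - z + r / 2) ^ 2 ≤ r ^ 2 / 4 + a * r := by nlinarith
            have := Real.le_sqrt_of_sq_le key
            linarith
        · rw [abs_le] at h; linarith [h.1]
    · rw [le_max_iff]
      rcases le_or_gt (z - a) r with h' | h'
      · exact Or.inr h'
      · left
        split_ifs at h with hpos
        · obtain ⟨ha', hz⟩ := hpos
          rcases min_le_iff.mp h with h | h
          · exact absurd (abs_le.mp h).2 (by linarith)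
          · have hmin : min a z = a := min_eq_left (by linarith)
            rw [hmin, div_le_iff₀ ha'] at h
            have key : (z - a) ^ 2 ≤ a * r := by nlinarith
            exact Real.le_sqrt_of_sq_le key
        · rw [abs_le] at h; linarith [h.2]
  · rintro ⟨h1, h2⟩
    rw [neg_le, neg_sub, le_max_iff] at h1
    rw [le_max_iff] at h2
    split_ifs with hpos
    · obtain ⟨ha', hz⟩ := hpos
      rcases le_or_gt z a with hza | hza
      · -- left side: a - z ≥ 0
        rcases h1 with h1 | h1
        · -- a - z ≤ √s - r/2
          have hmin : min a z = z := min_eq_right hza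
          have hsq : (a - z + r / 2) ^ 2 ≤ r ^ 2 / 4 + a * r := by
            nlinarith [hs1, hn1]
          have hd2 : (z - a) ^ 2 / min a z ≤ r := by
            rw [hmin, div_le_iff₀ hz]; nlinarith
          exact le_trans (min_le_right _ _) hd2
        · have : |z - a| ≤ r := by rw [abs_le]; constructor <;> linarith
          exact le_trans (min_le_left _ _) this
      · rcases h2 with h2 | h2
        · have hmin : min a z = a := min_eq_left (le_of_lt hza)
          have hsq : (z - a) ^ 2 ≤ a * r := by nlinarith [hs2, hn2]
          have hd2 : (z - a) ^ 2 / min a z ≤ r := by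
            rw [hmin, div_le_iff₀ ha']; nlinarith
          exact le_trans (min_le_right _ _) hd2
        · have : |z - a| ≤ r := by rw [abs_le]; constructor <;> linarith
          exact le_trans (min_le_left _ _) this
    · -- a = 0 or z ≤ 0
      rw [abs_le]
      rcases not_and_or.mp hpos with hna | hnz
      · -- a = 0
        have ha0 : a = 0 := le_antisymm (not_lt.mp hna) ha
        subst ha0
        have e1 : Real.sqrt (r ^ 2 / 4 + 0 * r) = r / 2 := by
          rw [zero_mul, add_zero]
          rw [show r ^ 2 / 4 = (r / 2) ^ 2 by ring]
          exact Real.sqrt_sq (by linarith)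
        have e2 : Real.sqrt ((0 : ℝ) * r) = 0 := by rw [zero_mul, Real.sqrt_zero]
        rw [e1] at h1; rw [e2] at h2
        constructor
        · rcases h1 with h1 | h1 <;> linarith
        · rcases h2 with h2 | h2 <;> linarith
      · -- z ≤ 0
        have hz0 : z ≤ 0 := not_lt.mp hnz
        constructor
        · rcases h1 with h1 | h1
          · -- a - z ≤ √s - r/2, but z ≤ 0 forces a - z ≤ r
            have hu : 0 ≤ a - z + r / 2 := by linarith
            have : (a - z + r / 2) ^ 2 ≤ r ^ 2 / 4 + a * r := by
              nlinarith [hs1, hn1]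
            nlinarith
          · linarith
        · rcases h2 with h2 | h2
          · nlinarith [hs2, hn2]
          · linarith
end

section
/- Let X be a finite set with |X| ≥ 2, let α ∈ ℝ^X_{K+} be a probability vector, and let r > 0. Then C(α,r) ⊆ B^K(α,r), where C(α,r) := {ζ ∈ ℝ^X_K : −ω'(α_x,r) ≤ ζ_x − α_x ≤ ω'(α_x,r) for all x ∈ X ∖ {x_max(α)}} and B^K(α,r) := {ζ ∈ ℝ^X_K : −ω↓(α_x,r) ≤ ζ_x − α_x ≤ ω↑(α_x,r) for all x ∈ X}. -/
open scoped BigOperators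

/-- `ω'(α,r) = ω↓(α,r)/(|X| - 1)`, where `k = |X|`. -/
noncomputable def omegaPrime (k : ℕ) (a r : ℝ) : ℝ :=
  omegaDown a r / ((k : ℝ) - 1)

/-- **Lemma 2:** `C(α,r) ⊆ B^K(α,r)`. Here `α` is a probability vector on `X`, `xmax` is an
index where `α` attains its maximum, `C(α,r)` constrains all coordinates except `xmax` by
`±ω'`, and `B^K(α,r)` is the intersection of the box `B(α,r)` with the hyperplane of vectors
summing to `1`. -/
theorem C_subset_BK {X : Type} [Fintype X] (hX : 2 ≤ Fintype.card X)
    (α : X → ℝ) (hα0 : ∀ x, 0 ≤ α x) (hα1 : ∑ x, α x = 1)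
    (xmax : X) (hmax : ∀ x, α x ≤ α xmax)
    (r : ℝ) (hr : 0 < r) :
    {ζ : X → ℝ | (∑ x, ζ x) = 1 ∧ ∀ x, x ≠ xmax →
        -omegaPrime (Fintype.card X) (α x) r ≤ ζ x - α x ∧
          ζ x - α x ≤ omegaPrime (Fintype.card X) (α x) r} ⊆
      {ζ : X → ℝ | (∑ x, ζ x) = 1 ∧ ∀ x,
        -omegaDown (α x) r ≤ ζ x - α x ∧ ζ x - α x ≤ omegaUp (α x) r} := by
  classical
  have hr' : 0 ≤ r := hr.le
  have hdown_pos : ∀ a, 0 < omegaDown a r := fun a => lt_max_iff.2 (Or.inr hr)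
  have hdu : ∀ a : ℝ, 0 ≤ a → omegaDown a r ≤ omegaUp a r := by
    intro a ha
    apply max_le _ (le_max_right _ _)
    have hs : (0:ℝ) ≤ Real.sqrt (a * r) := Real.sqrt_nonneg _
    have hsq : Real.sqrt (a * r) ^ 2 = a * r := Real.sq_sqrt (by positivity)
    have h1 : Real.sqrt (r ^ 2 / 4 + a * r) ≤ Real.sqrt (a * r) + r / 2 := by
      rw [show Real.sqrt (a * r) + r / 2 = Real.sqrt ((Real.sqrt (a * r) + r / 2) ^ 2) by
        rw [Real.sqrt_sq (by linarith)]]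
      apply Real.sqrt_le_sqrt
      nlinarith
    have h3 := le_max_left (Real.sqrt (a * r)) r
    linarith
  have hmono : ∀ a b : ℝ, a ≤ b → omegaDown a r ≤ omegaDown b r := by
    intro a b hab
    apply max_le _ (le_max_right _ _)
    have h1 : Real.sqrt (r ^ 2 / 4 + a * r) ≤ Real.sqrt (r ^ 2 / 4 + b * r) :=
      Real.sqrt_le_sqrt (by nlinarith)
    have h2 := le_max_left (Real.sqrt (r ^ 2 / 4 + b * r) - r / 2) r
    linarith
  intro ζ hζ
  obtain ⟨hsum, hb⟩ := hζ
  have hk1 : (1 : ℝ) ≤ (Fintype.card X : ℝ) - 1 := by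
    have : (2 : ℝ) ≤ (Fintype.card X : ℝ) := by exact_mod_cast hX
    linarith
  have hk1' : (0 : ℝ) < (Fintype.card X : ℝ) - 1 := by linarith
  refine ⟨hsum, fun x => ?_⟩
  by_cases hx : x = xmax
  · subst hx
    have hdiff : ∑ y, (ζ y - α y) = 0 := by
      rw [Finset.sum_sub_distrib, hsum, hα1]; ring
    have hsplit : ζ x - α x = -∑ y ∈ Finset.univ.erase x, (ζ y - α y) := by
      have h := Finset.add_sum_erase Finset.univ (fun y => ζ y - α y) (Finset.mem_univ x)
      linarith [hdiff ▸ h]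
    have hcardR : ((Finset.univ.erase x).card : ℝ) = (Fintype.card X : ℝ) - 1 := by
      rw [Finset.card_erase_of_mem (Finset.mem_univ x), Finset.card_univ]
      have h1 : 1 ≤ Fintype.card X := by omega
      push_cast [Nat.cast_sub h1]
      ring
    have habs : |∑ y ∈ Finset.univ.erase x, (ζ y - α y)| ≤ omegaDown (α x) r := by
      calc |∑ y ∈ Finset.univ.erase x, (ζ y - α y)|
          ≤ ∑ y ∈ Finset.univ.erase x, |ζ y - α y| := Finset.abs_sum_le_sum_abs _ _
        _ ≤ ∑ y ∈ Finset.univ.erase x, omegaDown (α x) r / ((Fintype.card X : ℝ) - 1) := by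
            apply Finset.sum_le_sum
            intro y hy
            have hyx : y ≠ x := Finset.ne_of_mem_erase hy
            obtain ⟨h1, h2⟩ := hb y hyx
            have habs' : |ζ y - α y| ≤ omegaPrime (Fintype.card X) (α y) r :=
              abs_le.2 ⟨h1, h2⟩
            refine habs'.trans ?_
            unfold omegaPrime
            gcongr
            exact hmono _ _ (hmax y)
        _ = omegaDown (α x) r := by
            rw [Finset.sum_const, nsmul_eq_mul, hcardR]
            field_simp
    have h := abs_le.1 habs
    refine ⟨by linarith [h.2], ?_⟩
    have h1 : ζ x - α x ≤ omegaDown (α x) r := by linarith [h.1]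
    exact h1.trans (hdu _ (hα0 x))
  · obtain ⟨h1, h2⟩ := hb x hx
    have hle : omegaPrime (Fintype.card X) (α x) r ≤ omegaDown (α x) r := by
      unfold omegaPrime
      rw [div_le_iff₀ hk1']
      nlinarith [hdown_pos (α x)]
    exact ⟨by linarith, h2.trans (hle.trans (hdu _ (hα0 x)))⟩
end

section
/- Let X be a finite set with |X| ≥ 2, let r > 0, and let α, β ∈ ℝ^X_{K+} be probability vectors with x_max(α) = x_max(β). If the quadrants Q'(α,r) and Q'(β,r) have a non-empty intersection, then d(α,β) ≤ r. -/
open scoped BigOperators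

/-- The vector "distance" `d(α,β) = max_{x ∈ X} d(α_x, β_x)`. -/
noncomputable def dVec {X : Type} [Fintype X] [Nonempty X] (a b : X → ℝ) : ℝ :=
  Finset.univ.sup' Finset.univ_nonempty fun x => dSc (a x) (b x)

lemma dSc_symm (a b : ℝ) : dSc a b = dSc b a := by
  unfold dSc
  have h2 : (b - a) ^ 2 = (a - b) ^ 2 := by ring
  by_cases h : 0 < a ∧ 0 < b
  · rw [if_pos h, if_pos h.symm, abs_sub_comm, min_comm a b, h2]
  · rw [if_neg h, if_neg (fun hc => h hc.symm), abs_sub_comm]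

lemma dSc_le_abs (a b : ℝ) : dSc a b ≤ |b - a| := by
  unfold dSc; split
  · exact min_le_left _ _
  · exact le_refl _

lemma key_s11 (r a b c : ℝ) (hr : 0 < r) (ha : 0 ≤ a) (hc : 0 ≤ c) (hab : a ≤ b)
    (hcb : c ≤ b) (ht : b - a ≤ omegaDown c r) : dSc a b ≤ r := by
  set t := b - a with htdef
  have ht0 : 0 ≤ t := by linarith
  by_cases h1 : t ≤ r
  · calc dSc a b ≤ |b - a| := dSc_le_abs a b
      _ = t := abs_of_nonneg ht0
      _ ≤ r := h1
  · push_neg at h1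
    have hts : t ≤ Real.sqrt (r ^ 2 / 4 + c * r) - r / 2 := by
      rcases le_max_iff.mp ht with h | h
      · exact h
      · linarith
    have hs : (0:ℝ) ≤ r ^ 2 / 4 + c * r := by positivity
    have hsq : (t + r / 2) ^ 2 ≤ r ^ 2 / 4 + c * r := by
      nlinarith [Real.sq_sqrt hs, Real.sqrt_nonneg (r ^ 2 / 4 + c * r)]
    have ht2 : t ^ 2 ≤ a * r := by nlinarith
    have ha' : 0 < a := by nlinarith
    have hb' : 0 < b := by linarith
    have : dSc a b = min |b - a| ((b - a) ^ 2 / min a b) := by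
      unfold dSc; rw [if_pos ⟨ha', hb'⟩]
    rw [this, min_eq_left hab]
    calc min |b - a| ((b - a) ^ 2 / a) ≤ (b - a) ^ 2 / a := min_le_right _ _
      _ ≤ r := by rw [div_le_iff₀ ha']; nlinarith

lemma omegaDown_mono {r a b : ℝ} (hr : 0 ≤ r) (h : a ≤ b) :
    omegaDown a r ≤ omegaDown b r := by
  unfold omegaDown
  gcongr

lemma omegaDown_nonneg {a r : ℝ} (hr : 0 ≤ r) : 0 ≤ omegaDown a r :=
  le_trans hr (le_max_right _ _)

lemma omegaPrime_le {k : ℕ} (hk : 2 ≤ k) {a r : ℝ} (hr : 0 ≤ r) :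
    omegaPrime k a r ≤ omegaDown a r := by
  unfold omegaPrime
  apply div_le_self (omegaDown_nonneg hr)
  have : (2:ℝ) ≤ (k:ℝ) := by exact_mod_cast hk
  linarith

/-- **Lemma 3:** if `α` and `β` are probability vectors with the same maximizing index `xmax`,
and the quadrants `Q'(α,r)` and `Q'(β,r)` have a common point `ζ`, then `d(α,β) ≤ r`. -/
theorem quadrants_intersect_imp_d_le {X : Type} [Fintype X] [Nonempty X]
    (hX : 2 ≤ Fintype.card X) (r : ℝ) (hr : 0 < r)
    (α β : X → ℝ)
    (hα0 : ∀ x, 0 ≤ α x) (hα1 : ∑ x, α x = 1)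
    (hβ0 : ∀ x, 0 ≤ β x) (hβ1 : ∑ x, β x = 1)
    (xmax : X) (hαmax : ∀ x, α x ≤ α xmax) (hβmax : ∀ x, β x ≤ β xmax)
    (ζ : X → ℝ)
    (hζα : ∀ x, x ≠ xmax →
      0 ≤ ζ x - α x ∧ ζ x - α x ≤ omegaPrime (Fintype.card X) (α x) r)
    (hζβ : ∀ x, x ≠ xmax →
      0 ≤ ζ x - β x ∧ ζ x - β x ≤ omegaPrime (Fintype.card X) (β x) r) :
    dVec α β ≤ r := by
  classical
  set k := Fintype.card X with hk
  apply Finset.sup'_le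
  intro x _
  by_cases hx : x = xmax
  · -- the xmax coordinate
    subst hx
    set S := Finset.univ.erase x with hS
    have hcard : (S.card : ℝ) = (k : ℝ) - 1 := by
      rw [hS, Finset.card_erase_of_mem (Finset.mem_univ x), Finset.card_univ]
      have h1 : 1 ≤ Fintype.card X := by omega
      push_cast [Nat.cast_sub h1]
      ring
    have hαs : α x + ∑ y ∈ S, α y = 1 := by
      rw [hS, Finset.add_sum_erase _ _ (Finset.mem_univ x)]; exact hα1
    have hβs : β x + ∑ y ∈ S, β y = 1 := by
      rw [hS, Finset.add_sum_erase _ _ (Finset.mem_univ x)]; exact hβ1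
    have hk1 : (1:ℝ) ≤ (k : ℝ) - 1 := by
      have : (2:ℝ) ≤ (k:ℝ) := by exact_mod_cast hX
      linarith
    have hpos : (0:ℝ) < (k:ℝ) - 1 := by linarith
    rcases le_total (α x) (β x) with hab | hab
    · have hbound : ∀ y ∈ S, α y - β y ≤ omegaPrime k (β x) r := by
        intro y hy
        have hy' : y ≠ x := Finset.ne_of_mem_erase hy
        have h3 : omegaPrime k (β y) r ≤ omegaPrime k (β x) r :=
          (div_le_div_iff_of_pos_right hpos).mpr (omegaDown_mono hr.le (hβmax y))
        linarith [(hζα y hy').1, (hζβ y hy').2]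
      have hsum : β x - α x = ∑ y ∈ S, (α y - β y) := by
        rw [Finset.sum_sub_distrib]; linarith
      have hfin : β x - α x ≤ omegaDown (β x) r := by
        rw [hsum]
        calc ∑ y ∈ S, (α y - β y) ≤ S.card • omegaPrime k (β x) r :=
              Finset.sum_le_card_nsmul S _ _ hbound
          _ = ((k:ℝ)-1) * (omegaDown (β x) r / ((k:ℝ)-1)) := by
              rw [nsmul_eq_mul, hcard]; rfl
          _ = omegaDown (β x) r := by field_simp
      exact key_s11 r (α x) (β x) (β x) hr (hα0 x) (hβ0 x) hab le_rfl hfin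
    · have hbound : ∀ y ∈ S, β y - α y ≤ omegaPrime k (α x) r := by
        intro y hy
        have hy' : y ≠ x := Finset.ne_of_mem_erase hy
        have h3 : omegaPrime k (α y) r ≤ omegaPrime k (α x) r :=
          (div_le_div_iff_of_pos_right hpos).mpr (omegaDown_mono hr.le (hαmax y))
        linarith [(hζβ y hy').1, (hζα y hy').2]
      have hsum : α x - β x = ∑ y ∈ S, (β y - α y) := by
        rw [Finset.sum_sub_distrib]; linarith
      have hfin : α x - β x ≤ omegaDown (α x) r := by
        rw [hsum]
        calc ∑ y ∈ S, (β y - α y) ≤ S.card • omegaPrime k (α x) r :=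
              Finset.sum_le_card_nsmul S _ _ hbound
          _ = ((k:ℝ)-1) * (omegaDown (α x) r / ((k:ℝ)-1)) := by
              rw [nsmul_eq_mul, hcard]; rfl
          _ = omegaDown (α x) r := by field_simp
      rw [dSc_symm]
      exact key_s11 r (β x) (α x) (α x) hr (hβ0 x) (hα0 x) hab le_rfl hfin
  · -- a non-max coordinate
    have h1 := hζα x hx
    have h2 := hζβ x hx
    rcases le_total (α x) (β x) with hab | hab
    · exact key_s11 r (α x) (β x) (α x) hr (hα0 x) (hα0 x) hab hab
        (by
          have : β x - α x ≤ omegaPrime k (α x) r := by linarith [h2.1, h1.2]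
          linarith [omegaPrime_le hX hr.le (a := α x)])
    · rw [dSc_symm]
      exact key_s11 r (β x) (α x) (β x) hr (hβ0 x) (hβ0 x) hab hab
        (by
          have : α x - β x ≤ omegaPrime k (β x) r := by linarith [h1.1, h2.2]
          linarith [omegaPrime_le hX hr.le (a := β x)])
end

section
/- Let X be a finite set with |X| ≥ 2, let α ∈ ℝ^X_{K+} be a probability vector, and let r > 0. Then the weight of the quadrant Q'(α,r) satisfies ∫_{Q'(α,r)} φ(ζ') dζ' ≥ r^{(|X|−1)/2} · (√(2 + 1/(|X|−1)) − √2)^{|X|−1}. -/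
open scoped BigOperators
open MeasureTheory

lemma int1d {a b : ℝ} (ha : 0 ≤ a) (hab : a ≤ b) :
    ∫ t in Set.Icc a b, 1 / Real.sqrt (4 * t) = Real.sqrt b - Real.sqrt a := by
  rw [MeasureTheory.integral_Icc_eq_integral_Ioc, ← intervalIntegral.integral_of_le hab]
  have hcong : Set.EqOn (fun t => 1 / Real.sqrt (4 * t))
      (fun t => (1/2 : ℝ) * t ^ (-(1/2) : ℝ)) (Set.uIcc a b) := by
    intro t ht
    rw [Set.uIcc_of_le hab] at ht
    have ht0 : 0 ≤ t := le_trans ha ht.1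
    have h4 : Real.sqrt (4 * t) = 2 * Real.sqrt t := by
      rw [Real.sqrt_mul (by norm_num : (0:ℝ) ≤ 4) t, show Real.sqrt 4 = 2 by
        rw [show (4:ℝ) = 2^2 by norm_num, Real.sqrt_sq (by norm_num : (0:ℝ) ≤ 2)]]
    simp only [h4, Real.rpow_neg ht0, ← Real.sqrt_eq_rpow]
    rw [one_div, mul_inv]
    ring
  rw [intervalIntegral.integral_congr hcong, intervalIntegral.integral_const_mul,
    integral_rpow (Or.inl (by norm_num : (-1:ℝ) < -(1/2)))]
  rw [Real.sqrt_eq_rpow, Real.sqrt_eq_rpow]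
  norm_num
  ring

lemma le_of_sq_le' {A B : ℝ} (hA : 0 ≤ A) (hB : 0 ≤ B) (h : A^2 ≤ B^2) : A ≤ B := by
  have := Real.sqrt_le_sqrt h
  rwa [Real.sqrt_sq hA, Real.sqrt_sq hB] at this

lemma key_ineq_s12 {N a r : ℝ} (hN : 1 ≤ N) (ha : 0 ≤ a) (hr : 0 < r) :
    Real.sqrt r * (Real.sqrt (2 + 1/N) - Real.sqrt 2)
      ≤ Real.sqrt (a + omegaDown a r / N) - Real.sqrt a := by
  have hN0 : 0 < N := lt_of_lt_of_le one_pos hN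
  set e := 1/N with he_def
  have he0 : 0 < e := by positivity
  have he1 : e ≤ 1 := by rw [he_def]; exact (div_le_one hN0).mpr hN
  set s := Real.sqrt r with hs_def
  set v := Real.sqrt (2 + e) with hv_def
  set w := Real.sqrt 2 with hw_def
  have hs2 : s^2 = r := Real.sq_sqrt hr.le
  have hv2 : v^2 = 2 + e := Real.sq_sqrt (by linarith)
  have hw2 : w^2 = 2 := Real.sq_sqrt (by norm_num)
  have hs0 : 0 ≤ s := Real.sqrt_nonneg _
  have hv0 : 0 ≤ v := Real.sqrt_nonneg _
  have hw0 : 0 ≤ w := Real.sqrt_nonneg _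
  have hsp : 0 < s := Real.sqrt_pos.mpr hr
  have hvp : 0 < v := Real.sqrt_pos.mpr (by linarith)
  have hdivN : ∀ x : ℝ, x / N = x * e := fun x => by rw [he_def]; ring
  -- reduction: it suffices to bound with any u ≤ omegaDown a r
  have main : ∀ u : ℝ, u ≤ omegaDown a r →
      s * (v - w) ≤ Real.sqrt (a + u * e) - Real.sqrt a →
      s * (v - w) ≤ Real.sqrt (a + omegaDown a r / N) - Real.sqrt a := by
    intro u hule h
    refine le_trans h (sub_le_sub_right (Real.sqrt_le_sqrt ?_) _)
    rw [hdivN]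
    have : u * e ≤ omegaDown a r * e := by
      exact mul_le_mul_of_nonneg_right hule he0.le
    linarith
  rcases le_or_gt a (2*r) with hcase | hcase
  · -- case a ≤ 2r : use u = r
    refine main r (le_max_right _ _) ?_
    have har : 0 ≤ a + r * e := by positivity
    set p := Real.sqrt a with hp_def
    set q := Real.sqrt (a + r * e) with hq_def
    have hp2 : p^2 = a := Real.sq_sqrt ha
    have hq2 : q^2 = a + r * e := Real.sq_sqrt har
    have hp0 : 0 ≤ p := Real.sqrt_nonneg _
    have hq0 : 0 ≤ q := Real.sqrt_nonneg _
    -- q * (s*w) ≥ (s*v) * p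
    have hkey : s * v * p ≤ q * (s * w) := by
      refine le_of_sq_le' (by positivity) (by positivity) ?_
      have : (s*v*p)^2 = (2*r + r*e) * a := by rw [mul_pow, mul_pow, hs2, hv2, hp2]; ring
      have h2 : (q*(s*w))^2 = (a + r*e) * (2*r) := by rw [mul_pow, mul_pow, hq2, hs2, hw2]; ring
      rw [this, h2]
      nlinarith [mul_nonneg he0.le (mul_nonneg hr.le (sub_nonneg.mpr hcase))]
    -- conclude q + s*w ≥ s*v + p, i.e. goal
    have hsum : s * v + p ≤ q + s * w := by
      refine le_of_sq_le' (by positivity) (by positivity) ?_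
      have e1 : (s*v+p)^2 = r*(2+e) + a + 2*(s*v*p) := by
        have h' : (s*v+p)^2 = s^2*v^2 + p^2 + 2*(s*v*p) := by ring
        rw [h', hs2, hv2, hp2]
      have e2 : (q+s*w)^2 = (a + r*e) + 2*r + 2*(q*(s*w)) := by
        have h' : (q+s*w)^2 = q^2 + s^2*w^2 + 2*(q*(s*w)) := by ring
        rw [h', hq2, hs2, hw2]; ring
      rw [e1, e2]; linarith [hkey]
    linarith
  · -- case a > 2r : use u = √(r²/4 + a r) - r/2
    set u := Real.sqrt (r ^ 2 / 4 + a * r) - r / 2 with hu_def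
    have hsq : (u + r/2)^2 = r^2/4 + a*r := by
      rw [hu_def, sub_add_cancel]
      exact Real.sq_sqrt (by positivity)
    have huu : u^2 + u*r = a*r := by linear_combination hsq
    have hur : r ≤ u := by
      have h1 : (3*r/2)^2 ≤ r^2/4 + a*r := by nlinarith
      have h2 := Real.sqrt_le_sqrt h1
      rw [Real.sqrt_sq (by linarith : 0 ≤ 3*r/2)] at h2
      rw [hu_def]; linarith
    have hu0 : 0 < u := lt_of_lt_of_le hr hur
    refine main u (le_max_left _ _) ?_
    have har : 0 ≤ a + u * e := by positivity
    set p := Real.sqrt a with hp_def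
    set q := Real.sqrt (a + u * e) with hq_def
    have hp2 : p^2 = a := Real.sq_sqrt ha
    have hq2 : q^2 = a + u * e := Real.sq_sqrt har
    have hp0 : 0 ≤ p := Real.sqrt_nonneg _
    have hq0 : 0 ≤ q := Real.sqrt_nonneg _
    have hps : p * s ≤ u * w := by
      refine le_of_sq_le' (by positivity) (by positivity) ?_
      rw [mul_pow, mul_pow, hp2, hs2, hw2]
      have h1 : u*r ≤ u*u := mul_le_mul_of_nonneg_left hur hu0.le
      calc a * r = u^2 + u*r := huu.symm
        _ ≤ u^2 + u*u := by linarith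
        _ = u^2 * 2 := by ring
    have hqs : q * s ≤ u * v := by
      refine le_of_sq_le' (by positivity) (by positivity) ?_
      rw [mul_pow, mul_pow, hq2, hs2, hv2]
      have h1 : u*r ≤ u*u := mul_le_mul_of_nonneg_left hur hu0.le
      have h2 : u*r*e ≤ u*u*e := mul_le_mul_of_nonneg_right h1 he0.le
      calc (a + u*e) * r = u^2 + u*r + u*r*e := by linear_combination -huu
        _ ≤ u^2 + u*u + u*u*e := by linarith
        _ = u^2 * (2+e) := by ring
    have hqp : p ≤ q := Real.sqrt_le_sqrt (le_add_of_nonneg_right (by positivity))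
    have hdiff : (q - p) * (q + p) = u * e := by linear_combination hq2 - hp2
    have hvw : (v - w) * (v + w) = e := by linear_combination hv2 - hw2
    have hpos : 0 < u * (v + w) := by positivity
    have h6 : (q + p) * s ≤ u * (v + w) := by
      calc (q + p) * s = q * s + p * s := by ring
        _ ≤ u * v + u * w := add_le_add hqs hps
        _ = u * (v + w) := by ring
    have e3 : s * (v - w) * (u * (v + w)) = u * e * s := by
      have h' : s * (v - w) * (u * (v + w)) = ((v - w) * (v + w)) * u * s := by ring
      rw [h', hvw]; ring
    have e4 : u * e * s = (q - p) * ((q + p) * s) := by rw [← hdiff]; ring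
    have e5 : (q - p) * ((q + p) * s) ≤ (q - p) * (u * (v + w)) :=
      mul_le_mul_of_nonneg_left h6 (by linarith)
    have final : s * (v - w) * (u * (v + w)) ≤ (q - p) * (u * (v + w)) := by
      rw [e3, e4]; exact e5
    have := le_of_mul_le_mul_right final hpos
    linarith

/-- **Lemma 4:** the weight `∫_{Q'(α,r)} φ dζ'` of the quadrant `Q'(α,r) ⊆ ℝ^{X'}`
(with density `φ(ζ') = ∏_x 1/√(4ζ_x)`) is at least
`r^{(|X|-1)/2} (√(2 + 1/(|X|-1)) - √2)^{|X|-1}`. -/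
theorem quadrant_weight_lower_bound {X : Type} [Fintype X] [DecidableEq X]
    (hX : 2 ≤ Fintype.card X)
    (α : X → ℝ) (hα0 : ∀ x, 0 ≤ α x) (hα1 : ∑ x, α x = 1)
    (xmax : X) (hmax : ∀ x, α x ≤ α xmax)
    (r : ℝ) (hr : 0 < r) :
    r ^ (((Fintype.card X : ℝ) - 1) / 2) *
        (Real.sqrt (2 + 1 / ((Fintype.card X : ℝ) - 1)) - Real.sqrt 2) ^
          (Fintype.card X - 1) ≤
      ∫ ζ : {x : X // x ≠ xmax} → ℝ in
        {ζ | ∀ x : {x : X // x ≠ xmax},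
          0 ≤ ζ x - α x.1 ∧ ζ x - α x.1 ≤ omegaPrime (Fintype.card X) (α x.1) r},
        ∏ x, 1 / Real.sqrt (4 * ζ x) := by
  classical
  set k := Fintype.card X with hk
  have hN1 : (1:ℝ) ≤ (k:ℝ) - 1 := by
    have : (2:ℝ) ≤ (k:ℝ) := by exact_mod_cast hX
    linarith
  have hN0 : (0:ℝ) < (k:ℝ) - 1 := lt_of_lt_of_le one_pos hN1
  set w : X → ℝ := fun x => omegaPrime k (α x) r with hw_def
  have hw0 : ∀ x, 0 ≤ w x := by
    intro x
    have h1 : 0 < omegaDown (α x) r := lt_of_lt_of_le hr (le_max_right _ _)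
    exact le_of_lt (div_pos h1 hN0)
  -- the set as a product of intervals
  have hset : {ζ : {x : X // x ≠ xmax} → ℝ | ∀ x : {x : X // x ≠ xmax},
        0 ≤ ζ x - α x.1 ∧ ζ x - α x.1 ≤ omegaPrime k (α x.1) r}
      = Set.pi Set.univ (fun x : {x : X // x ≠ xmax} =>
          Set.Icc (α x.1) (α x.1 + w x.1)) := by
    ext ζ
    simp only [Set.mem_setOf_eq, Set.mem_pi, Set.mem_univ, forall_true_left, Set.mem_Icc]
    constructor
    · intro h x; have := h x; constructor <;> [linarith [this.1]; linarith [this.2]]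
    · intro h x; have := h x; constructor <;> [linarith [this.1]; linarith [this.2]]
  rw [hset, ← MeasureTheory.integral_indicator
    (MeasurableSet.univ_pi (fun x => measurableSet_Icc))]
  have hind : ∀ ζ : {x : X // x ≠ xmax} → ℝ,
      (Set.pi Set.univ (fun x : {x : X // x ≠ xmax} =>
          Set.Icc (α x.1) (α x.1 + w x.1))).indicator
        (fun ζ => ∏ x, 1 / Real.sqrt (4 * ζ x)) ζ
      = ∏ x : {x : X // x ≠ xmax},
          (Set.Icc (α x.1) (α x.1 + w x.1)).indicator
            (fun t => 1 / Real.sqrt (4 * t)) (ζ x) := by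
    intro ζ
    by_cases hζ : ζ ∈ Set.pi Set.univ (fun x : {x : X // x ≠ xmax} =>
        Set.Icc (α x.1) (α x.1 + w x.1))
    · rw [Set.indicator_of_mem hζ]
      refine Finset.prod_congr rfl (fun x _ => ?_)
      rw [Set.indicator_of_mem (hζ x (Set.mem_univ x))]
    · rw [Set.indicator_of_notMem hζ]
      rw [Set.mem_pi] at hζ
      push_neg at hζ
      obtain ⟨x, _, hx⟩ := hζ
      exact (Finset.prod_eq_zero (Finset.mem_univ x)
        (by rw [Set.indicator_of_notMem hx])).symm
  simp_rw [hind]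
  rw [MeasureTheory.integral_fintype_prod_volume_eq_prod
    (f := fun (x : {x : X // x ≠ xmax}) (t : ℝ) =>
      (Set.Icc (α x.1) (α x.1 + w x.1)).indicator (fun t => 1 / Real.sqrt (4 * t)) t)]
  have hone : ∀ x : {x : X // x ≠ xmax},
      ∫ t : ℝ, (Set.Icc (α x.1) (α x.1 + w x.1)).indicator
        (fun t => 1 / Real.sqrt (4 * t)) t
      = Real.sqrt (α x.1 + w x.1) - Real.sqrt (α x.1) := by
    intro x
    rw [MeasureTheory.integral_indicator measurableSet_Icc]
    exact int1d (hα0 x.1) (le_add_of_nonneg_right (hw0 x.1))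
  rw [Finset.prod_congr rfl (fun x _ => hone x)]
  -- cardinality
  have hcard : Fintype.card {x : X // x ≠ xmax} = k - 1 := by
    rw [Fintype.card_subtype_compl, Fintype.card_subtype_eq]
  -- LHS rewriting
  have hcast : ((k:ℝ) - 1) = ((k - 1 : ℕ) : ℝ) := by
    have : 1 ≤ k := le_trans one_le_two hX
    push_cast [Nat.cast_sub this]
    ring
  have hrpow : r ^ (((k:ℝ) - 1) / 2) = (Real.sqrt r) ^ (k - 1) := by
    rw [Real.sqrt_eq_rpow, ← Real.rpow_natCast (r ^ ((1:ℝ)/2)) (k-1), ← Real.rpow_mul hr.le]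
    congr 1
    rw [← hcast]
    ring
  rw [hrpow, ← mul_pow]
  -- now factorwise bound
  have hbound : ∀ x : {x : X // x ≠ xmax},
      Real.sqrt r * (Real.sqrt (2 + 1/((k:ℝ)-1)) - Real.sqrt 2)
        ≤ Real.sqrt (α x.1 + w x.1) - Real.sqrt (α x.1) := by
    intro x
    have := key_ineq_s12 (N := (k:ℝ) - 1) hN1 (hα0 x.1) hr
    simpa [hw_def, omegaPrime] using this
  have hnn : 0 ≤ Real.sqrt r * (Real.sqrt (2 + 1/((k:ℝ)-1)) - Real.sqrt 2) := by
    have h2 : Real.sqrt 2 ≤ Real.sqrt (2 + 1/((k:ℝ)-1)) :=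
      Real.sqrt_le_sqrt (le_add_of_nonneg_right (by positivity))
    have := Real.sqrt_nonneg r
    nlinarith
  calc (Real.sqrt r * (Real.sqrt (2 + 1/((k:ℝ)-1)) - Real.sqrt 2)) ^ (k-1)
      = ∏ _x : {x : X // x ≠ xmax},
          Real.sqrt r * (Real.sqrt (2 + 1/((k:ℝ)-1)) - Real.sqrt 2) := by
        rw [Finset.prod_const, Finset.card_univ, hcard]
    _ ≤ ∏ x : {x : X // x ≠ xmax}, (Real.sqrt (α x.1 + w x.1) - Real.sqrt (α x.1)) :=
        Finset.prod_le_prod (fun x _ => hnn) (fun x _ => hbound x)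
end

section
/- Let X be a finite set with |X| ≥ 2, let r > 0, and define ψ_r(α) := √(α + ω'(α,r)) − √α for α ≥ 0, where ω'(α,r) := ω↓(α,r)/(|X|−1) and ω↓(α,r) := max(√(r²/4 + αr) − r/2, r). Then ψ_r is decreasing on [0, 2r) and increasing on [2r, ∞), so ψ_r attains its minimum at α = 2r; in particular ψ_r(α) ≥ ψ_r(2r) = √r · (√(2 + 1/(|X|−1)) − √2) for all α ≥ 0. -/
/-- `ψ_r(α) = √(α + ω'(α,r)) - √α`. -/
noncomputable def psi (k : ℕ) (r a : ℝ) : ℝ :=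
  Real.sqrt (a + omegaPrime k a r) - Real.sqrt a

open Real Set

private lemma sqrtDiff (x e : ℝ) (hx : 0 ≤ x) (he : 0 < e) :
    sqrt (x + e) - sqrt x = e / (sqrt (x + e) + sqrt x) := by
  have hpos : 0 < sqrt (x + e) + sqrt x :=
    add_pos_of_pos_of_nonneg (sqrt_pos.2 (by linarith)) (sqrt_nonneg x)
  rw [eq_div_iff hpos.ne']
  have h1 : sqrt (x + e) ^ 2 = x + e := sq_sqrt (by linarith)
  have h2 : sqrt x ^ 2 = x := sq_sqrt hx
  nlinarith [h1, h2]

private lemma gAnti (e : ℝ) (he : 0 < e) :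
    StrictAntiOn (fun x : ℝ => sqrt (x + e) - sqrt x) (Ici 0) := by
  intro x hx y hy hxy
  have hx0 : (0:ℝ) ≤ x := hx
  have hy0 : (0:ℝ) ≤ y := hy
  simp only
  rw [sqrtDiff x e hx0 he, sqrtDiff y e hy0 he]
  have h1 : sqrt (x + e) + sqrt x < sqrt (y + e) + sqrt y :=
    add_lt_add_of_lt_of_le (sqrt_lt_sqrt (by linarith) (by linarith))
      (sqrt_le_sqrt hxy.le)
  exact div_lt_div_of_pos_left he
    (add_pos_of_pos_of_nonneg (sqrt_pos.2 (by linarith)) (sqrt_nonneg x)) h1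

private lemma Fmono (b d : ℝ) (hb : 0 < b) (hd : 0 < d) :
    StrictMonoOn (fun u : ℝ => sqrt u / (sqrt (u + b) + sqrt (u + d))) (Ici 0) := by
  intro x hx y hy hxy
  have hx0 : (0:ℝ) ≤ x := hx
  have hy0 : (0:ℝ) ≤ y := le_of_lt (lt_of_le_of_lt hx0 hxy)
  have hdx : 0 < sqrt (x + b) + sqrt (x + d) :=
    add_pos (sqrt_pos.2 (by linarith)) (sqrt_pos.2 (by linarith))
  have hdy : 0 < sqrt (y + b) + sqrt (y + d) :=
    add_pos (sqrt_pos.2 (by linarith)) (sqrt_pos.2 (by linarith))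
  simp only
  rw [div_lt_div_iff₀ hdx hdy, mul_add, mul_add]
  have h1 : sqrt x * sqrt (y + b) < sqrt y * sqrt (x + b) := by
    rw [← sqrt_mul hx0, ← sqrt_mul hy0]
    exact sqrt_lt_sqrt (by positivity) (by nlinarith)
  have h2 : sqrt x * sqrt (y + d) < sqrt y * sqrt (x + d) := by
    rw [← sqrt_mul hx0, ← sqrt_mul hy0]
    exact sqrt_lt_sqrt (by positivity) (by nlinarith)
  exact add_lt_add h1 h2

private lemma psiBigEq (r c a : ℝ) (hr : 0 < r) (hc : 0 < c) (ha : 2*r ≤ a) :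
    sqrt (a + (sqrt (r^2/4 + a*r) - r/2) * c) - sqrt a
      = (c * sqrt r) * (sqrt (sqrt (r^2/4 + a*r) - r/2) /
          (sqrt ((sqrt (r^2/4 + a*r) - r/2) + (r + c*r)) +
           sqrt ((sqrt (r^2/4 + a*r) - r/2) + r))) := by
  set u : ℝ := sqrt (r^2/4 + a*r) - r/2 with hu
  have harg : 0 ≤ r^2/4 + a*r := by nlinarith
  have hu2 : (u + r/2)^2 = r^2/4 + a*r := by
    rw [hu, sub_add_cancel]; exact sq_sqrt harg
  have hur : r ≤ u := by
    have h32 : (3/2*r : ℝ) ≤ sqrt (r^2/4 + a*r) := by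
      rw [show (3/2*r : ℝ) = sqrt ((3/2*r)^2) from (sqrt_sq (by positivity)).symm]
      exact sqrt_le_sqrt (by nlinarith)
    rw [hu]; linarith
  have hu0 : 0 < u := lt_of_lt_of_le hr hur
  have ha_eq : a = u * (u + r) / r := by
    field_simp
    linear_combination -hu2
  have key1 : a + u * c = u * (u + (r + c*r)) / r := by
    rw [ha_eq]; field_simp; ring
  have key2 : sqrt (u * (u + (r + c*r)) / r) = sqrt u * sqrt (u + (r + c*r)) / sqrt r := by
    rw [sqrt_div (by positivity), sqrt_mul hu0.le]
  have key3 : sqrt (u * (u + r) / r) = sqrt u * sqrt (u + r) / sqrt r := by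
    rw [sqrt_div (by positivity), sqrt_mul hu0.le]
  rw [key1, key2, ha_eq, key3, div_sub_div_same, ← mul_sub]
  rw [show u + (r + c*r) = (u + r) + c*r by ring]
  rw [sqrtDiff (u + r) (c*r) (by positivity) (by positivity)]
  have hD : 0 < sqrt ((u + r) + c*r) + sqrt (u + r) :=
    add_pos (sqrt_pos.2 (by positivity)) (sqrt_pos.2 (by positivity))
  have hsr : sqrt r * sqrt r = r := mul_self_sqrt hr.le
  have hsrne : sqrt r ≠ 0 := by positivity
  field_simp
  linear_combination (-1 : ℝ) * hsr

/-- `ψ_r` is decreasing on `[0, 2r)` and increasing on `[2r, ∞)`, hence attains its minimum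
at `α = 2r`; in particular `ψ_r(α) ≥ ψ_r(2r) = √r (√(2 + 1/(|X|-1)) - √2)` for all `α ≥ 0`. -/
theorem psi_min_at_two_r {X : Type} [Fintype X] (hX : 2 ≤ Fintype.card X)
    (r : ℝ) (hr : 0 < r) :
    StrictAntiOn (psi (Fintype.card X) r) (Set.Ico 0 (2 * r)) ∧
    StrictMonoOn (psi (Fintype.card X) r) (Set.Ici (2 * r)) ∧
    (∀ a : ℝ, 0 ≤ a → psi (Fintype.card X) r (2 * r) ≤ psi (Fintype.card X) r a) ∧
    psi (Fintype.card X) r (2 * r) =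
      Real.sqrt r * (Real.sqrt (2 + 1 / ((Fintype.card X : ℝ) - 1)) - Real.sqrt 2) := by
  set k := Fintype.card X with hkdef
  have hk1 : (1:ℝ) ≤ (k:ℝ) - 1 := by
    have : (2:ℝ) ≤ (k:ℝ) := by exact_mod_cast hX
    linarith
  set c : ℝ := ((k:ℝ) - 1)⁻¹ with hcdef
  have hc : 0 < c := by
    rw [hcdef]; exact inv_pos.2 (by linarith)
  have hpsi : ∀ a, psi k r a = sqrt (a + omegaDown a r * c) - sqrt a := by
    intro a; unfold psi omegaPrime; rw [div_eq_mul_inv]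
  have hsmall : ∀ a, 0 ≤ a → a ≤ 2*r → omegaDown a r = r := by
    intro a ha0 ha2
    apply max_eq_right
    have h32 : sqrt (r^2/4 + a*r) ≤ 3/2*r := by
      rw [show (3/2*r : ℝ) = sqrt ((3/2*r)^2) from (sqrt_sq (by positivity)).symm]
      exact sqrt_le_sqrt (by nlinarith)
    linarith
  have hbig : ∀ a, 2*r ≤ a → omegaDown a r = sqrt (r^2/4 + a*r) - r/2 := by
    intro a ha
    apply max_eq_left
    have h32 : (3/2*r : ℝ) ≤ sqrt (r^2/4 + a*r) := by
      rw [show (3/2*r : ℝ) = sqrt ((3/2*r)^2) from (sqrt_sq (by positivity)).symm]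
      exact sqrt_le_sqrt (by nlinarith)
    linarith
  have hAnti : StrictAntiOn (psi k r) (Ico 0 (2*r)) := by
    intro x hx y hy hxy
    rw [hpsi, hpsi, hsmall x hx.1 hx.2.le, hsmall y hy.1 hy.2.le]
    exact gAnti (r*c) (by positivity) hx.1 hy.1 hxy
  have hpsiBig : ∀ a, 2*r ≤ a → psi k r a
      = (c * sqrt r) * (sqrt (sqrt (r^2/4 + a*r) - r/2) /
          (sqrt ((sqrt (r^2/4 + a*r) - r/2) + (r + c*r)) +
           sqrt ((sqrt (r^2/4 + a*r) - r/2) + r))) := by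
    intro a ha
    rw [hpsi, hbig a ha]
    exact psiBigEq r c a hr hc ha
  have hUge : ∀ a, 2*r ≤ a → r ≤ sqrt (r^2/4 + a*r) - r/2 := by
    intro a ha
    have h32 : (3/2*r : ℝ) ≤ sqrt (r^2/4 + a*r) := by
      rw [show (3/2*r : ℝ) = sqrt ((3/2*r)^2) from (sqrt_sq (by positivity)).symm]
      exact sqrt_le_sqrt (by nlinarith)
    linarith
  have hMono : StrictMonoOn (psi k r) (Ici (2*r)) := by
    intro x hx y hy hxy
    have hx' : 2*r ≤ x := hx
    have hy' : 2*r ≤ y := hy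
    rw [hpsiBig x hx', hpsiBig y hy']
    apply mul_lt_mul_of_pos_left _ (by positivity : (0:ℝ) < c * sqrt r)
    have hUlt : sqrt (r^2/4 + x*r) - r/2 < sqrt (r^2/4 + y*r) - r/2 := by
      have : sqrt (r^2/4 + x*r) < sqrt (r^2/4 + y*r) :=
        sqrt_lt_sqrt (by nlinarith) (by nlinarith)
      linarith
    exact Fmono (r + c*r) r (by positivity) hr
      (le_trans hr.le (hUge x hx')) (le_trans hr.le (hUge y hy')) hUlt
  have hval : psi k r (2*r) = sqrt (2*r + r*c) - sqrt (2*r) := by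
    rw [hpsi, hsmall (2*r) (by positivity) le_rfl]
  have hmin : ∀ a : ℝ, 0 ≤ a → psi k r (2*r) ≤ psi k r a := by
    intro a ha
    rcases le_total a (2*r) with h | h
    · rw [hval, hpsi, hsmall a ha h]
      have := (gAnti (r*c) (by positivity)).antitoneOn ha
        (mem_Ici.2 (by positivity : (0:ℝ) ≤ 2*r)) h
      simpa using this
    · exact hMono.monotoneOn (mem_Ici.2 le_rfl) (mem_Ici.2 h) h
  have hfinal : psi k r (2*r) = sqrt r * (sqrt (2 + 1/((k:ℝ)-1)) - sqrt 2) := by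
    rw [hval, show 2*r + r*c = r*(2+c) by ring, show (2:ℝ)*r = r*2 by ring,
      sqrt_mul hr.le, sqrt_mul hr.le, ← mul_sub, hcdef, one_div]
  exact ⟨hAnti, hMono, hmin, hfinal⟩
end

section
/- Let X be a finite set with |X| ≥ 2, fix x_max ∈ X with X' := X ∖ {x_max}, and let 0 < r ≤ 1. Then V' ⊆ U', where V' := ∪ { Q'(α,r) : α ∈ ℝ^X_{K+}, x_max(α) = x_max } and U' := {ζ' ∈ ℝ^{X'} : Σ_{x∈X'} ζ_x ≤ 2 and ζ_x ≥ 0 for all x ∈ X'}. -/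
open scoped BigOperators

lemma omegaDown_le_one {a r : ℝ} (ha : 0 ≤ a) (ha1 : a ≤ 1) (hr0 : 0 < r) (hr1 : r ≤ 1) :
    omegaDown a r ≤ 1 := by
  unfold omegaDown
  rw [max_le_iff]
  refine ⟨?_, hr1⟩
  have h : Real.sqrt (r ^ 2 / 4 + a * r) ≤ 1 + r / 2 := by
    have h1 : r ^ 2 / 4 + a * r ≤ (1 + r / 2) ^ 2 := by nlinarith
    calc Real.sqrt (r ^ 2 / 4 + a * r) ≤ Real.sqrt ((1 + r / 2) ^ 2) :=
          Real.sqrt_le_sqrt h1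
      _ = 1 + r / 2 := by
          rw [Real.sqrt_sq (by linarith)]
  linarith

/-- **Lemma 5:** for `0 < r ≤ 1`, the union `V'` of all quadrants `Q'(α,r)` over probability
vectors `α` maximized at `xmax` is contained in
`U' = {ζ' : ∑_{x ∈ X'} ζ_x ≤ 2, ζ_x ≥ 0}`. -/
theorem V_subset_U {X : Type} [Fintype X] [DecidableEq X] (hX : 2 ≤ Fintype.card X)
    (xmax : X) (r : ℝ) (hr0 : 0 < r) (hr1 : r ≤ 1) :
    {ζ : {x : X // x ≠ xmax} → ℝ | ∃ α : X → ℝ,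
        (∀ x, 0 ≤ α x) ∧ (∑ x, α x = 1) ∧ (∀ x, α x ≤ α xmax) ∧
        ∀ x : {x : X // x ≠ xmax},
          0 ≤ ζ x - α x.1 ∧ ζ x - α x.1 ≤ omegaPrime (Fintype.card X) (α x.1) r} ⊆
      {ζ : {x : X // x ≠ xmax} → ℝ | (∑ x, ζ x) ≤ 2 ∧ ∀ x, 0 ≤ ζ x} := by
  rintro ζ ⟨α, hα0, hαsum, hαmax, hq⟩
  have hk1 : (1 : ℝ) ≤ (Fintype.card X : ℝ) - 1 := by
    have : (2 : ℝ) ≤ (Fintype.card X : ℝ) := by exact_mod_cast hX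
    linarith
  have hkpos : (0 : ℝ) < (Fintype.card X : ℝ) - 1 := by linarith
  have hα1 : ∀ x, α x ≤ 1 := by
    intro x
    have : α x ≤ ∑ y, α y := Finset.single_le_sum (fun y _ => hα0 y) (Finset.mem_univ x)
    linarith [hαsum ▸ this]
  have hcard : Fintype.card {x : X // x ≠ xmax} = Fintype.card X - 1 := by
    rw [Fintype.card_subtype_compl, Fintype.card_subtype_eq]
  have hsumα : ∑ x : {x : X // x ≠ xmax}, α x.1 ≤ 1 := by
    have h1 : ∑ x : {x : X // x ≠ xmax}, α x.1 = ∑ x ∈ ({xmax}ᶜ : Finset X), α x :=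
      (Finset.sum_subtype _ (fun x => by simp) α).symm
    have h2 := Fintype.sum_eq_add_sum_compl xmax α
    have h0 := hα0 xmax
    rw [hαsum] at h2
    rw [h1]
    linarith
  constructor
  · have hbound : ∀ x : {x : X // x ≠ xmax},
        ζ x ≤ α x.1 + 1 / ((Fintype.card X : ℝ) - 1) := by
      intro x
      have h2 := (hq x).2
      have hω : omegaPrime (Fintype.card X) (α x.1) r ≤ 1 / ((Fintype.card X : ℝ) - 1) := by
        unfold omegaPrime
        gcongr
        exact omegaDown_le_one (hα0 x.1) (hα1 x.1) hr0 hr1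
      linarith
    calc ∑ x : {x : X // x ≠ xmax}, ζ x
        ≤ ∑ x : {x : X // x ≠ xmax}, (α x.1 + 1 / ((Fintype.card X : ℝ) - 1)) :=
          Finset.sum_le_sum fun x _ => hbound x
      _ = (∑ x : {x : X // x ≠ xmax}, α x.1)
            + (Fintype.card {x : X // x ≠ xmax} : ℝ) * (1 / ((Fintype.card X : ℝ) - 1)) := by
          rw [Finset.sum_add_distrib, Finset.sum_const, Finset.card_univ, nsmul_eq_mul]
      _ ≤ 1 + 1 := by
          have hc : (Fintype.card {x : X // x ≠ xmax} : ℝ) = (Fintype.card X : ℝ) - 1 := by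
            rw [hcard]
            push_cast [Nat.cast_sub (by omega : 1 ≤ Fintype.card X)]
            ring
          rw [hc]
          have : ((Fintype.card X : ℝ) - 1) * (1 / ((Fintype.card X : ℝ) - 1)) = 1 := by
            field_simp
          rw [this]
          linarith
      _ = 2 := by norm_num
  · intro x
    have := (hq x).1
    have := hα0 x.1
    linarith
end

section
/- Let W: X → Y be a DMC with fixed input distribution P_X (all π(x) > 0, all π(y) > 0), and let y_a, y_b ∈ Y be distinct letters with π(y_a) ≤ 2/|Y| and π(y_b) ≤ 2/|Y|. Then the merger Q of y_a and y_b satisfies ΔI = I(W,P_X) − I(Q,P_X) ≤ (4|X|/|Y|) · d(α, β), where α and β are the posterior vectors of y_a and y_b. -/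
open scoped BigOperators

/-- Mutual information `I(W, P_X) = ∑ x, η(π(x)) - ∑ x y, π(y) η(W(x|y))`. -/
noncomputable def mutInfo {X Y : Type} [Fintype X] [Fintype Y]
    (pX : X → ℝ) (W : X → Y → ℝ) : ℝ :=
  (∑ x, eta (pX x)) - ∑ x, ∑ y, outDist pX W y * eta (post pX W x y)

/-- The merger of output letters `ya` and `yb`: the new output alphabet is
`Option {y // y ≠ ya ∧ y ≠ yb}`, with `none` playing the role of the merged letter `y_ab`. -/
noncomputable def merger {X Y : Type} [DecidableEq Y] (W : X → Y → ℝ) (ya yb : Y) (x : X) :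
    Option {y : Y // y ≠ ya ∧ y ≠ yb} → ℝ
  | none => W x ya + W x yb
  | some y => W x y.1

section AuxLemmas


lemma mlog_le (m x : ℝ) (hm : 0 < m) (hx : 0 < x) :
    m * (Real.log x - Real.log m) ≤ x - m := by
  have h := Real.log_le_sub_one_of_pos (div_pos hx hm)
  rw [Real.log_div hx.ne' hm.ne'] at h
  have h2 := mul_le_mul_of_nonneg_left h hm.le
  calc m * (Real.log x - Real.log m) ≤ m * (x / m - 1) := h2
    _ = x - m := by field_simp

lemma bracket_eq (pa pb a b : ℝ) (hs : pa + pb ≠ 0) :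
    (pa+pb) * eta ((pa*a+pb*b)/(pa+pb)) - pa * eta a - pb * eta b
      = pa*a*(Real.log a - Real.log ((pa*a+pb*b)/(pa+pb)))
        + pb*b*(Real.log b - Real.log ((pa*a+pb*b)/(pa+pb))) := by
  have hm : (pa+pb) * ((pa*a+pb*b)/(pa+pb)) = pa*a+pb*b := mul_div_cancel₀ _ hs
  simp only [eta]
  linear_combination (-(Real.log ((pa*a+pb*b)/(pa+pb)))) * hm

lemma bracket_le_d1 (pa pb a b : ℝ) (hpa : 0 < pa) (hpb : 0 < pb)
    (ha : 0 ≤ a) (hab : a ≤ b) :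
    (pa+pb) * eta ((pa*a+pb*b)/(pa+pb)) - pa * eta a - pb * eta b
      ≤ (pa+pb) * (b - a) := by
  have hs : 0 < pa + pb := by linarith
  rcases eq_or_lt_of_le (ha.trans hab) with hb | hb
  · have ha0 : a = 0 := le_antisymm (hab.trans hb.ge) ha
    simp [← hb, ha0, eta]
  · set m := (pa*a+pb*b)/(pa+pb) with hmdef
    have hm0 : 0 < m := div_pos (by nlinarith) hs
    have hsm : (pa+pb)*m = pa*a+pb*b := mul_div_cancel₀ _ hs.ne'
    have hma : a ≤ m := by nlinarith
    have hmb : m ≤ b := by nlinarith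
    rw [bracket_eq _ _ _ _ hs.ne']
    have h1 : pa*a*(Real.log a - Real.log m) ≤ 0 := by
      rcases ha.eq_or_lt with h | h
      · simp [← h]
      · have hle : Real.log a ≤ Real.log m := Real.log_le_log h hma
        have := mul_nonneg (mul_nonneg hpa.le h.le) (sub_nonneg.2 hle)
        nlinarith [this]
    have h2 : m * (Real.log b - Real.log m) ≤ b - m := mlog_le m b hm0 hb
    have h3 : 0 ≤ Real.log b - Real.log m := sub_nonneg.2 (Real.log_le_log hm0 hmb)
    have h4 : pb*b ≤ (pa+pb)*m := by nlinarith
    have h5 : pb*b*(Real.log b - Real.log m) ≤ (pa+pb)*m*(Real.log b - Real.log m) :=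
      mul_le_mul_of_nonneg_right h4 h3
    have h6 : (pa+pb)*(m*(Real.log b - Real.log m)) ≤ (pa+pb)*(b-m) :=
      mul_le_mul_of_nonneg_left h2 hs.le
    nlinarith

lemma bracket_le_d2 (pa pb a b : ℝ) (hpa : 0 < pa) (hpb : 0 < pb)
    (ha : 0 < a) (hab : a ≤ b) :
    (pa+pb) * eta ((pa*a+pb*b)/(pa+pb)) - pa * eta a - pb * eta b
      ≤ (pa+pb) * ((b - a)^2 / a) := by
  have hs : 0 < pa + pb := by linarith
  have hb : 0 < b := lt_of_lt_of_le ha hab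
  set m := (pa*a+pb*b)/(pa+pb) with hmdef
  have hm0 : 0 < m := div_pos (by nlinarith) hs
  have hsm : (pa+pb)*m = pa*a+pb*b := mul_div_cancel₀ _ hs.ne'
  have hma : a ≤ m := by nlinarith
  rw [bracket_eq _ _ _ _ hs.ne']
  set La := Real.log a
  set Lb := Real.log b
  set Lm := Real.log m
  have h1 : m*(La - Lm) ≤ a - m := mlog_le m a hm0 ha
  have h2 : m*(Lb - Lm) ≤ b - m := mlog_le m b hm0 hb
  have h3 : (pa*a*(La-Lm) + pb*b*(Lb-Lm)) * m ≤ pa*a*(a-m)+pb*b*(b-m) := by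
    nlinarith [mul_le_mul_of_nonneg_left h1 (by positivity : (0:ℝ) ≤ pa*a),
      mul_le_mul_of_nonneg_left h2 (by positivity : (0:ℝ) ≤ pb*b)]
  have h4 : (pa*a*(a-m)+pb*b*(b-m))*(pa+pb) = pa*pb*(b-a)^2 := by
    linear_combination (-(pa*a+pb*b)) * hsm
  have h5 : (pa*a*(La-Lm) + pb*b*(Lb-Lm))*(m*(pa+pb)) ≤ pa*pb*(b-a)^2 := by
    nlinarith [mul_le_mul_of_nonneg_right h3 hs.le]
  have hpp : pa*pb ≤ (pa+pb)^2 := by nlinarith [sq_nonneg (pa-pb)]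
  have hc : pa*pb*a ≤ (pa+pb)^2*m := by
    nlinarith [mul_le_mul_of_nonneg_left hma (by positivity : (0:ℝ) ≤ pa*pb),
      mul_le_mul_of_nonneg_right hpp hm0.le]
  rw [show (pa+pb) * ((b-a)^2/a) = (pa+pb)*(b-a)^2/a from by ring, le_div_iff₀ ha]
  have h6 : (pa*a*(La-Lm) + pb*b*(Lb-Lm))*a*(m*(pa+pb)) ≤ (pa+pb)*(b-a)^2*(m*(pa+pb)) := by
    nlinarith [mul_le_mul_of_nonneg_right h5 ha.le,
      mul_le_mul_of_nonneg_right hc (sq_nonneg (b-a))]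
  exact le_of_mul_le_mul_right h6 (by positivity)

lemma dSc_nonneg (a z : ℝ) : 0 ≤ dSc a z := by
  rw [dSc]
  split_ifs with h
  · exact le_min (abs_nonneg _) (div_nonneg (sq_nonneg _) (le_min h.1.le h.2.le))
  · exact abs_nonneg _

lemma dSc_comm (a z : ℝ) : dSc a z = dSc z a := by
  by_cases h : 0 < a ∧ 0 < z
  · rw [dSc, dSc, if_pos h, if_pos ⟨h.2, h.1⟩, abs_sub_comm, min_comm a z,
      show (z-a)^2 = (a-z)^2 from by ring]
  · rw [dSc, dSc, if_neg h, if_neg (fun h' => h ⟨h'.2, h'.1⟩), abs_sub_comm]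

lemma bracket_le_dSc_aux (pa pb a b : ℝ) (hpa : 0 < pa) (hpb : 0 < pb)
    (ha : 0 ≤ a) (hab : a ≤ b) :
    (pa+pb) * eta ((pa*a+pb*b)/(pa+pb)) - pa * eta a - pb * eta b
      ≤ (pa+pb) * dSc a b := by
  have habs : |b - a| = b - a := abs_of_nonneg (sub_nonneg.2 hab)
  rw [dSc]
  split_ifs with h
  · rw [min_eq_left hab] -- min a b = a? no, this rewrites (min a b) inside
    rcases le_total |b - a| ((b-a)^2 / a) with h' | h'
    · rw [min_eq_left h', habs]
      exact bracket_le_d1 pa pb a b hpa hpb ha hab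
    · rw [min_eq_right h']
      exact bracket_le_d2 pa pb a b hpa hpb h.1 hab
  · rw [habs]
    exact bracket_le_d1 pa pb a b hpa hpb ha hab

lemma bracket_le_dSc (pa pb a b : ℝ) (hpa : 0 < pa) (hpb : 0 < pb)
    (ha : 0 ≤ a) (hb : 0 ≤ b) :
    (pa+pb) * eta ((pa*a+pb*b)/(pa+pb)) - pa * eta a - pb * eta b
      ≤ (pa+pb) * dSc a b := by
  rcases le_total a b with hab | hab
  · exact bracket_le_dSc_aux pa pb a b hpa hpb ha hab
  · have := bracket_le_dSc_aux pb pa b a hpb hpa hb hab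
    rw [dSc_comm]
    calc (pa+pb) * eta ((pa*a+pb*b)/(pa+pb)) - pa * eta a - pb * eta b
        = (pb+pa) * eta ((pb*b+pa*a)/(pb+pa)) - pb * eta b - pa * eta a := by
          rw [add_comm pb pa, add_comm (pb*b) (pa*a)]; ring
      _ ≤ (pb+pa) * dSc b a := this
      _ = (pa+pb) * dSc b a := by ring

end AuxLemmas

/-- If `π(y_a), π(y_b) ≤ 2/|Y|`, then the merger of `ya` and `yb` satisfies
`ΔI ≤ (4|X|/|Y|) d(α, β)`. -/
theorem deltaI_le_d_small {X Y : Type} [Fintype X] [Nonempty X] [Fintype Y] [DecidableEq Y]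
    (pX : X → ℝ) (W : X → Y → ℝ)
    (hW0 : ∀ x y, 0 ≤ W x y) (hW1 : ∀ x, ∑ y, W x y = 1)
    (hpX : ∀ x, 0 < pX x) (hpXsum : ∑ x, pX x = 1)
    (hpY : ∀ y, 0 < outDist pX W y)
    (ya yb : Y) (hab : ya ≠ yb)
    (hya : outDist pX W ya ≤ 2 / (Fintype.card Y : ℝ))
    (hyb : outDist pX W yb ≤ 2 / (Fintype.card Y : ℝ)) :
    mutInfo pX W - mutInfo pX (merger W ya yb) ≤
      4 * (Fintype.card X : ℝ) / (Fintype.card Y : ℝ) *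
        dVec (fun x => post pX W x ya) (fun x => post pX W x yb) := by
  set Q := merger W ya yb with hQ
  set pa := outDist pX W ya with hpadef
  set pb := outDist pX W yb with hpbdef
  have hpa : 0 < pa := hpY ya
  have hpb : 0 < pb := hpY yb
  have hs : 0 < pa + pb := by linarith
  have hQnone : outDist pX Q none = pa + pb := by
    simp [hQ, hpadef, hpbdef, outDist, merger, mul_add, Finset.sum_add_distrib]
  -- per-x inner sum difference
  have hsum : ∀ x, (∑ z : Option {y : Y // y ≠ ya ∧ y ≠ yb},
        outDist pX Q z * eta (post pX Q x z))
      - (∑ y, outDist pX W y * eta (post pX W x y))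
      = (pa+pb) * eta (post pX Q x none)
        - pa * eta (post pX W x ya) - pb * eta (post pX W x yb) := by
    intro x
    rw [Fintype.sum_option]
    have hfilt : Finset.univ.filter (fun y : Y => ¬(y ≠ ya ∧ y ≠ yb)) = {ya, yb} := by
      ext y
      simp [not_and_or, or_comm]
      tauto
    have hsplit : (∑ y, outDist pX W y * eta (post pX W x y))
        = (∑ y ∈ Finset.univ.filter (fun y : Y => y ≠ ya ∧ y ≠ yb),
            outDist pX W y * eta (post pX W x y))
          + (pa * eta (post pX W x ya) + pb * eta (post pX W x yb)) := by
      rw [← Finset.sum_filter_add_sum_filter_not Finset.univ (fun y : Y => y ≠ ya ∧ y ≠ yb)]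
      rw [hfilt, Finset.sum_pair hab]
    have hsub : (∑ y : {y : Y // y ≠ ya ∧ y ≠ yb},
          outDist pX Q (some y) * eta (post pX Q x (some y)))
        = ∑ y ∈ Finset.univ.filter (fun y : Y => y ≠ ya ∧ y ≠ yb),
            outDist pX W y * eta (post pX W x y) :=
      (Finset.sum_subtype _ (by simp) (fun y => outDist pX W y * eta (post pX W x y))).symm
    rw [hQnone, hsub, hsplit]
    ring
  have key : mutInfo pX W - mutInfo pX Q
      = ∑ x, ((pa+pb) * eta (post pX Q x none)
          - pa * eta (post pX W x ya) - pb * eta (post pX W x yb)) := by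
    calc mutInfo pX W - mutInfo pX Q
        = ∑ x, ((∑ z : Option {y : Y // y ≠ ya ∧ y ≠ yb},
              outDist pX Q z * eta (post pX Q x z))
            - ∑ y, outDist pX W y * eta (post pX W x y)) := by
          rw [mutInfo, mutInfo, Finset.sum_sub_distrib]; ring
      _ = _ := Finset.sum_congr rfl fun x _ => hsum x
  have hγ : ∀ x, post pX Q x none
      = (pa * post pX W x ya + pb * post pX W x yb) / (pa + pb) := by
    intro x
    have h1 : post pX Q x none = pX x * (W x ya + W x yb) / (pa + pb) := by
      rw [post, hQnone]
      rfl
    rw [h1, post, post, ← hpadef, ← hpbdef]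
    field_simp
  set dv := dVec (fun x => post pX W x ya) (fun x => post pX W x yb) with hdv
  have hdvx : ∀ x, dSc (post pX W x ya) (post pX W x yb) ≤ dv := fun x =>
    Finset.le_sup' (fun x => dSc (post pX W x ya) (post pX W x yb)) (Finset.mem_univ x)
  have hdv0 : 0 ≤ dv :=
    (dSc_nonneg _ _).trans (hdvx (Classical.arbitrary X))
  have hpost : ∀ (x : X) (y : Y), 0 ≤ post pX W x y := fun x y =>
    div_nonneg (mul_nonneg (hpX x).le (hW0 x y)) (hpY y).le
  have hd : ∀ x, (pa+pb) * eta (post pX Q x none)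
      - pa * eta (post pX W x ya) - pb * eta (post pX W x yb) ≤ (pa+pb) * dv := by
    intro x
    have hb1 := bracket_le_dSc pa pb (post pX W x ya) (post pX W x yb)
      hpa hpb (hpost x ya) (hpost x yb)
    rw [← hγ x] at hb1
    exact hb1.trans (mul_le_mul_of_nonneg_left (hdvx x) hs.le)
  have hcY : (0:ℝ) < (Fintype.card Y : ℝ) := by
    have : 0 < Fintype.card Y := Fintype.card_pos_iff.2 ⟨ya⟩
    exact_mod_cast this
  have hpab : pa + pb ≤ 4 / (Fintype.card Y : ℝ) := by
    have h4 : (2:ℝ) / (Fintype.card Y : ℝ) + 2 / (Fintype.card Y : ℝ)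
        = 4 / (Fintype.card Y : ℝ) := by ring
    linarith
  calc mutInfo pX W - mutInfo pX Q
      = ∑ x, ((pa+pb) * eta (post pX Q x none)
          - pa * eta (post pX W x ya) - pb * eta (post pX W x yb)) := key
    _ ≤ ∑ _x : X, (pa+pb) * dv := Finset.sum_le_sum fun x _ => hd x
    _ = (Fintype.card X : ℝ) * ((pa+pb) * dv) := by
        rw [Finset.sum_const, nsmul_eq_mul, Finset.card_univ]
    _ ≤ (Fintype.card X : ℝ) * ((4 / (Fintype.card Y : ℝ)) * dv) := by
        apply mul_le_mul_of_nonneg_left (mul_le_mul_of_nonneg_right hpab hdv0) (by positivity)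
    _ = 4 * (Fintype.card X : ℝ) / (Fintype.card Y : ℝ) * dv := by ring
end
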